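/- The category of supported sets over A is locally finitely presentable, and a supported set is a finitely presentable object if and only if its underlying set is finite. -/

import Mathlib

open CategoryTheory

/-- A supported set over `A`: a set with a finite support for each element. -/
structure SuppSet (A : Type) : Type 1 where
  carrier : Type
  supp : carrier → Set A
  finite : ∀ x, (supp x).Finite

variable {A : Type}

instance : Category (SuppSet A) where
  Hom X Y := {f : X.carrier → Y.carrier // ∀ x, Y.supp (f x) ⊆ X.supp x}
  id _ := ⟨fun x => x, fun _ => subset_rfl⟩
  comp f g := ⟨fun x => g.1 (f.1 x), fun x => (g.2 _).trans (f.2 x)⟩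
  id_comp _ := Subtype.ext rfl
  comp_id _ := Subtype.ext rfl
  assoc _ _ _ := Subtype.ext rfl

/-- The forgetful functor from supported sets to sets. -/
def Forget (A : Type) : SuppSet A ⥤ Type where
  obj X := X.carrier
  map f := TypeCat.ofHom f.1
  map_id _ := rfl
  map_comp _ _ := rfl

open Limits

/-- A supported set is finitely presentable if its hom-functor preserves
directed (filtered) colimits. -/
def FinitelyPresentable (X : SuppSet A) : Prop :=
  ∀ (J : Type) (_ : SmallCategory J), IsFiltered J →
    Nonempty (PreservesColimitsOfShape J (coyoneda.obj (Opposite.op X)))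

namespace SuppSetAux

variable {J : Type} [SmallCategory J]

/-- Underlying type-valued diagram. -/
abbrev Fc (F : J ⥤ SuppSet A) : J ⥤ Type := F ⋙ Forget A

/-- Support of an element of the colimit: intersection over representatives. -/
def csupp (F : J ⥤ SuppSet A) (q : colimit (Fc F)) : Set A :=
  {a | ∀ (j : J) (y : (F.obj j).carrier), colimit.ι (Fc F) j y = q → a ∈ (F.obj j).supp y}

lemma csupp_finite (F : J ⥤ SuppSet A) (q : colimit (Fc F)) : (csupp F q).Finite := by
  obtain ⟨j, y, hy⟩ := Types.jointly_surjective' q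
  exact ((F.obj j).finite y).subset fun a ha => ha j y hy

noncomputable def colimObj (F : J ⥤ SuppSet A) : SuppSet A :=
  ⟨colimit (Fc F), csupp F, csupp_finite F⟩

noncomputable def colimCocone (F : J ⥤ SuppSet A) : Cocone F where
  pt := colimObj F
  ι :=
    { app := fun j => ⟨colimit.ι (Fc F) j, fun y a ha => ha j y rfl⟩
      naturality := fun j j' f => by
        apply Subtype.ext
        funext y
        exact ConcreteCategory.congr_hom (colimit.w (Fc F) f) y }

noncomputable def colimIsColimit (F : J ⥤ SuppSet A) : IsColimit (colimCocone F) where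
  desc c := ⟨colimit.desc (Fc F) ((Forget A).mapCocone c), by
    intro q a ha j y hy
    subst hy
    have h1 : colimit.desc (Fc F) ((Forget A).mapCocone c) (colimit.ι (Fc F) j y)
        = (c.ι.app j).1 y := ConcreteCategory.congr_hom (colimit.ι_desc ((Forget A).mapCocone c) j) y
    rw [h1] at ha
    exact (c.ι.app j).2 y ha⟩
  fac c j := Subtype.ext (funext fun y => ConcreteCategory.congr_hom (colimit.ι_desc ((Forget A).mapCocone c) j) y)
  uniq c m hm := by
    apply Subtype.ext
    funext q
    obtain ⟨j, y, rfl⟩ := Types.jointly_surjective' q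
    have h1 : m.1 (colimit.ι (Fc F) j y) = (c.ι.app j).1 y :=
      congrFun (congrArg Subtype.val (hm j)) y
    exact h1.trans (ConcreteCategory.congr_hom (colimit.ι_desc ((Forget A).mapCocone c) j) y).symm

instance hasColimits : HasColimits (SuppSet A) where
  has_colimits_of_shape _ _ := { has_colimit := fun F => HasColimit.mk ⟨_, colimIsColimit F⟩ }

lemma map_comp_apply (F : J ⥤ SuppSet A) {a b c : J} (f : a ⟶ b) (g : b ⟶ c)
    (z : (F.obj a).carrier) : (F.map (f ≫ g)).1 z = (F.map g).1 ((F.map f).1 z) := by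
  rw [F.map_comp]; rfl

lemma ι_map (F : J ⥤ SuppSet A) {a b : J} (f : a ⟶ b) (z : (F.obj a).carrier) :
    colimit.ι (Fc F) b ((F.map f).1 z) = colimit.ι (Fc F) a z :=
  ConcreteCategory.congr_hom (colimit.w (Fc F) f) z

/-- In a filtered colimit, the support of a colimit element is attained at some stage. -/
lemma exists_rep (F : J ⥤ SuppSet A) [IsFiltered J] (q : colimit (Fc F)) :
    ∃ (j : J) (y : (F.obj j).carrier),
      colimit.ι (Fc F) j y = q ∧ (F.obj j).supp y ⊆ csupp F q := by
  classical
  obtain ⟨j0, y0, h0⟩ := Types.jointly_surjective' q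
  have key : ∀ (n : ℕ) (j : J) (y : (F.obj j).carrier), colimit.ι (Fc F) j y = q →
      (((F.obj j).finite y).toFinset \ (csupp_finite F q).toFinset).card ≤ n →
      ∃ (j' : J) (y' : (F.obj j').carrier),
        colimit.ι (Fc F) j' y' = q ∧ (F.obj j').supp y' ⊆ csupp F q := by
    intro n
    induction n with
    | zero =>
      intro j y hy hcard
      refine ⟨j, y, hy, fun a ha => ?_⟩
      by_contra hna
      have : a ∈ ((F.obj j).finite y).toFinset \ (csupp_finite F q).toFinset := by
        simp only [Finset.mem_sdiff, Set.Finite.mem_toFinset]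
        exact ⟨ha, hna⟩
      have := Finset.card_pos.2 ⟨a, this⟩
      omega
    | succ n ih =>
      intro j y hy hcard
      by_cases hsub : (F.obj j).supp y ⊆ csupp F q
      · exact ⟨j, y, hy, hsub⟩
      · obtain ⟨a, ha, hna⟩ := Set.not_subset.1 hsub
        have hna' : ∃ (j1 : J) (y1 : (F.obj j1).carrier),
            colimit.ι (Fc F) j1 y1 = q ∧ a ∉ (F.obj j1).supp y1 := by
          by_contra hc
          push_neg at hc
          exact hna (fun j1 y1 h1 => hc j1 y1 h1)
        obtain ⟨j1, y1, h1, ha1⟩ := hna'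
        have heq : colimit.ι (Fc F) j y = colimit.ι (Fc F) j1 y1 := hy.trans h1.symm
        obtain ⟨k, u, v, huv⟩ := (Types.FilteredColimit.colimit_eq_iff (Fc F)).1 heq
        have huv' : (F.map u).1 y = (F.map v).1 y1 := huv
        refine ih k ((F.map u).1 y) ((ι_map F u y).trans hy) ?_
        have hsub1 : ((F.obj k).finite ((F.map u).1 y)).toFinset \ (csupp_finite F q).toFinset
            ⊆ (((F.obj j).finite y).toFinset \ (csupp_finite F q).toFinset).erase a := by
          intro b hb
          simp only [Finset.mem_sdiff, Set.Finite.mem_toFinset, Finset.mem_erase] at hb ⊢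
          refine ⟨?_, (F.map u).2 y hb.1, hb.2⟩
          rintro rfl
          exact ha1 ((F.map v).2 y1 (huv' ▸ hb.1))
        have hmem : a ∈ ((F.obj j).finite y).toFinset \ (csupp_finite F q).toFinset := by
          simp only [Finset.mem_sdiff, Set.Finite.mem_toFinset]
          exact ⟨ha, hna⟩
        have := Finset.card_le_card hsub1
        rw [Finset.card_erase_of_mem hmem] at this
        omega
  exact key _ j0 y0 h0 le_rfl

/-- Finitely many pointwise equalities in a filtered colimit can be equalized at one stage. -/
lemma equalize_finite (F : J ⥤ SuppSet A) [IsFiltered J] {i j : J}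
    {T : Type} [Fintype T] (gi : T → (F.obj i).carrier) (gj : T → (F.obj j).carrier)
    (h : ∀ x, colimit.ι (Fc F) i (gi x) = colimit.ι (Fc F) j (gj x)) :
    ∃ (k : J) (u : i ⟶ k) (v : j ⟶ k), ∀ x, (F.map u).1 (gi x) = (F.map v).1 (gj x) := by
  classical
  have key : ∀ s : Finset T, ∃ (k : J) (u : i ⟶ k) (v : j ⟶ k),
      ∀ x ∈ s, (F.map u).1 (gi x) = (F.map v).1 (gj x) := by
    intro s
    induction s using Finset.induction with
    | empty =>
      exact ⟨IsFiltered.max i j, IsFiltered.leftToMax i j, IsFiltered.rightToMax i j,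
        fun x hx => absurd hx (Finset.notMem_empty x)⟩
    | @insert a s _ ih =>
      obtain ⟨k, u, v, huv⟩ := ih
      have heq : colimit.ι (Fc F) k ((F.map u).1 (gi a))
          = colimit.ι (Fc F) k ((F.map v).1 (gj a)) := by
        rw [ι_map, ι_map]; exact h a
      obtain ⟨k', p, r, hpr⟩ := (Types.FilteredColimit.colimit_eq_iff (Fc F)).1 heq
      have hpr' : (F.map p).1 ((F.map u).1 (gi a)) = (F.map r).1 ((F.map v).1 (gj a)) := hpr
      refine ⟨IsFiltered.coeq p r, u ≫ p ≫ IsFiltered.coeqHom p r,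
        v ≫ p ≫ IsFiltered.coeqHom p r, ?_⟩
      intro x hx
      rcases Finset.mem_insert.1 hx with rfl | hx
      · calc (F.map (u ≫ p ≫ IsFiltered.coeqHom p r)).1 (gi x)
            = (F.map (IsFiltered.coeqHom p r)).1 ((F.map p).1 ((F.map u).1 (gi x))) := by
              rw [map_comp_apply, map_comp_apply]
          _ = (F.map (IsFiltered.coeqHom p r)).1 ((F.map r).1 ((F.map v).1 (gj x))) := by
              rw [hpr']
          _ = (F.map (v ≫ r ≫ IsFiltered.coeqHom p r)).1 (gj x) := by
              rw [map_comp_apply, map_comp_apply]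
          _ = (F.map (v ≫ p ≫ IsFiltered.coeqHom p r)).1 (gj x) := by
              rw [← IsFiltered.coeq_condition]
      · calc (F.map (u ≫ p ≫ IsFiltered.coeqHom p r)).1 (gi x)
            = (F.map (IsFiltered.coeqHom p r)).1 ((F.map p).1 ((F.map u).1 (gi x))) := by
              rw [map_comp_apply, map_comp_apply]
          _ = (F.map (IsFiltered.coeqHom p r)).1 ((F.map p).1 ((F.map v).1 (gj x))) := by
              rw [huv x hx]
          _ = (F.map (v ≫ p ≫ IsFiltered.coeqHom p r)).1 (gj x) := by
              rw [map_comp_apply, map_comp_apply]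
  obtain ⟨k, u, v, huv⟩ := key Finset.univ
  exact ⟨k, u, v, fun x => huv x (Finset.mem_univ x)⟩

/-- A supported set with finite carrier is finitely presentable. -/
lemma preserves_of_finite (X : SuppSet A) (hX : Finite X.carrier) :
    FinitelyPresentable X := by
  intro J _ hJ
  classical
  haveI := hJ
  haveI : Fintype X.carrier := Fintype.ofFinite _
  refine ⟨⟨fun {F} => preservesColimit_of_preserves_colimit_cocone (colimIsColimit F) ?_⟩⟩
  apply Types.FilteredColimit.isColimitOf
  · -- joint surjectivity
    intro f
    choose jx yx hrep hsup using fun x : X.carrier => exists_rep F (f.1 x)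
    obtain ⟨S, hS⟩ := IsFiltered.sup_objs_exists (Finset.univ.image jx)
    have hhom : ∀ x : X.carrier, Nonempty (jx x ⟶ S) := fun x =>
      hS (Finset.mem_image_of_mem jx (Finset.mem_univ x))
    have u : ∀ x : X.carrier, jx x ⟶ S := fun x => (hhom x).some
    refine ⟨S, ⟨fun x => (F.map (u x)).1 (yx x), fun x =>
      ((F.map (u x)).2 (yx x)).trans ((hsup x).trans (f.2 x))⟩, ?_⟩
    apply Subtype.ext
    funext x
    exact ((ι_map F (u x) (yx x)).trans (hrep x)).symm
  · -- pointwise equality at a stage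
    intro i j gi gj hij
    have hij' : ∀ x : X.carrier, colimit.ι (Fc F) i (gi.1 x) = colimit.ι (Fc F) j (gj.1 x) :=
      fun x => congrFun (congrArg Subtype.val hij) x
    obtain ⟨k, u, v, huv⟩ := equalize_finite F gi.1 gj.1 hij'
    exact ⟨k, u, v, Subtype.ext (funext huv)⟩

variable (X : SuppSet A)

/-- The diagram of finite subsets of a supported set. -/
def DFun : Finset X.carrier ⥤ SuppSet A where
  obj S := ⟨{x // x ∈ S}, fun x => X.supp x.1, fun x => X.finite x.1⟩
  map {S T} f := ⟨fun x => ⟨x.1, f.le x.2⟩, fun _ => subset_rfl⟩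
  map_id _ := Subtype.ext rfl
  map_comp _ _ := Subtype.ext rfl

def DCocone : Cocone (DFun X) where
  pt := X
  ι :=
    { app := fun S => ⟨fun x => x.1, fun _ => subset_rfl⟩
      naturality := fun S T f => Subtype.ext rfl }

def DIsColimit : IsColimit (DCocone X) where
  desc c := ⟨fun x => (c.ι.app {x}).1 ⟨x, Finset.mem_singleton_self x⟩,
    fun x => (c.ι.app {x}).2 ⟨x, Finset.mem_singleton_self x⟩⟩
  fac c S := by
    apply Subtype.ext
    funext y
    have h : ({y.1} : Finset X.carrier) ≤ S := Finset.singleton_subset_iff.2 y.2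
    have hn := congrFun (congrArg Subtype.val (c.ι.naturality (homOfLE h))) 
      ⟨y.1, Finset.mem_singleton_self y.1⟩
    exact hn.symm
  uniq c m hm := by
    apply Subtype.ext
    funext x
    exact congrFun (congrArg Subtype.val (hm {x})) ⟨x, Finset.mem_singleton_self x⟩

lemma finite_of_fp (h : FinitelyPresentable X) : Finite X.carrier := by
  classical
  haveI : IsFiltered (Finset X.carrier) := inferInstance
  obtain ⟨hp⟩ := h (Finset X.carrier) inferInstance inferInstance
  haveI := hp
  have hc : IsColimit ((coyoneda.obj (Opposite.op X)).mapCocone (DCocone X)) :=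
    isColimitOfPreserves _ (DIsColimit X)
  obtain ⟨S, g, hg⟩ := Types.jointly_surjective _ hc (𝟙 X)
  have hval : ∀ x : X.carrier, ((g.1 x).1 : X.carrier) = x := fun x =>
    congrFun (congrArg Subtype.val hg) x
  haveI : Finite ((DFun X).obj S).carrier := (inferInstance : Finite {x // x ∈ S})
  exact Finite.of_injective g.1 fun a b hab => by rw [← hval a, ← hval b, hab]

end SuppSetAux

theorem suppSet_lfp (A : Type) :
    HasColimits (SuppSet A) ∧
    (∀ X : SuppSet A, FinitelyPresentable X ↔ Finite X.carrier) ∧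
    (∀ X : SuppSet A, ∃ (J : Type) (_ : SmallCategory J) (_ : IsFiltered J)
        (D : J ⥤ SuppSet A) (c : Cocone D),
      (∀ j, FinitelyPresentable (D.obj j)) ∧ c.pt = X ∧ Nonempty (IsColimit c)) := by
  refine ⟨SuppSetAux.hasColimits,
    fun X => ⟨SuppSetAux.finite_of_fp X, fun h => SuppSetAux.preserves_of_finite X h⟩,
    fun X => ?_⟩
  classical
  exact ⟨Finset X.carrier, inferInstance, inferInstance, SuppSetAux.DFun X,
    SuppSetAux.DCocone X,
    fun S => SuppSetAux.preserves_of_finite _ ((inferInstance : Finite {x // x ∈ S})), rfl,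
    ⟨SuppSetAux.DIsColimit X⟩⟩
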